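/- Every maximal finite subgroup of O⁺(2,1)(ℤ) is conjugate in O⁺(2,1)(ℤ) to one of the two subgroups G_{H−E₁−E₂} := ⟨Ref_{E₁−E₂}, Ref_{E₂}⟩ or G_{E₂} := ⟨Ref_{H−E₁−E₂}, Ref_{E₁−E₂}⟩. -/

import Mathlib

open Matrix

/-- The symmetric bilinear form `Q(x,y) = x₀y₀ − x₁y₁ − x₂y₂` on `ℤ³`. -/
def Q3 (x y : Fin 3 → ℤ) : ℤ := x 0 * y 0 - x 1 * y 1 - x 2 * y 2

/-- The Gram matrix `J = diag(1,−1,−1)` of `Q3`. -/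
def J3 : Matrix (Fin 3) (Fin 3) ℤ := Matrix.diagonal ![1, -1, -1]

/-- The matrix of the reflection `w ↦ w − (2·Q(v,w)/Q(v,v))·v` about `v`. -/
def reflMat3 (v : Fin 3 → ℤ) : Matrix (Fin 3) (Fin 3) ℤ :=
  Matrix.of fun i j => (if i = j then 1 else 0) - 2 * Q3 v (Pi.single j 1) / Q3 v v * v i

/-- `Ref_{H−E₁−E₂}` as an element of `GL(3,ℤ)`. -/
def refHE1E2 : (Matrix (Fin 3) (Fin 3) ℤ)ˣ :=
  ⟨reflMat3 ![1, -1, -1], reflMat3 ![1, -1, -1], by decide, by decide⟩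

/-- `Ref_{E₁−E₂}` as an element of `GL(3,ℤ)`. -/
def refE1E2 : (Matrix (Fin 3) (Fin 3) ℤ)ˣ :=
  ⟨reflMat3 ![0, 1, -1], reflMat3 ![0, 1, -1], by decide, by decide⟩

/-- `Ref_{E₂}` as an element of `GL(3,ℤ)`. -/
def refE2 : (Matrix (Fin 3) (Fin 3) ℤ)ˣ :=
  ⟨reflMat3 ![0, 0, 1], reflMat3 ![0, 0, 1], by decide, by decide⟩

/-- The set `O⁺(2,1)(ℤ)` of elements of `GL(3,ℤ)` preserving `J` and with positive
`(0,0)` entry. -/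
def Oplus21 : Set (Matrix (Fin 3) (Fin 3) ℤ)ˣ :=
  {A | (A : Matrix (Fin 3) (Fin 3) ℤ)ᵀ * J3 * (A : Matrix (Fin 3) (Fin 3) ℤ) = J3 ∧
    0 < (A : Matrix (Fin 3) (Fin 3) ℤ) 0 0}

----------------------------------------------------------------
-- Abbreviations
abbrev V3 := Fin 3 → ℤ
abbrev MU := (Matrix (Fin 3) (Fin 3) ℤ)ˣ

def ee0 : V3 := ![1,0,0]

lemma refE2_val : (refE2 : Matrix (Fin 3) (Fin 3) ℤ) = !![1,0,0;0,1,0;0,0,-1] := by decide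
lemma refE1E2_val : (refE1E2 : Matrix (Fin 3) (Fin 3) ℤ) = !![1,0,0;0,0,1;0,1,0] := by decide
lemma refHE1E2_val : (refHE1E2 : Matrix (Fin 3) (Fin 3) ℤ) = !![3,2,2;-2,-1,-2;-2,-2,-1] := by decide

-- scalar entries of the orthogonality relation
lemma ortho_entries {A : Matrix (Fin 3) (Fin 3) ℤ} (h : Aᵀ * J3 * A = J3) (i j : Fin 3) :
    A 0 i * A 0 j - A 1 i * A 1 j - A 2 i * A 2 j = J3 i j := by
  have hij := congrFun (congrFun h i) j
  simpa [Matrix.mul_apply, Fin.sum_univ_three, J3, Matrix.diagonal, transpose_apply,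
    mul_comm, mul_assoc, mul_left_comm, sub_eq_add_neg] using hij

lemma Q3_mulVec {A : Matrix (Fin 3) (Fin 3) ℤ} (h : Aᵀ * J3 * A = J3) (x y : V3) :
    Q3 (A.mulVec x) (A.mulVec y) = Q3 x y := by
  have h00 := ortho_entries h 0 0
  have h01 := ortho_entries h 0 1
  have h02 := ortho_entries h 0 2
  have h10 := ortho_entries h 1 0
  have h11 := ortho_entries h 1 1
  have h12 := ortho_entries h 1 2
  have h20 := ortho_entries h 2 0
  have h21 := ortho_entries h 2 1
  have h22 := ortho_entries h 2 2
  simp [J3, Matrix.diagonal] at h00 h01 h02 h10 h11 h12 h20 h21 h22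
  simp only [Q3, Matrix.mulVec, dotProduct, Fin.sum_univ_three]
  linear_combination (x 0 * y 0) * h00 + (x 0 * y 1) * h01 + (x 0 * y 2) * h02 +
    (x 1 * y 0) * h10 + (x 1 * y 1) * h11 + (x 1 * y 2) * h12 +
    (x 2 * y 0) * h20 + (x 2 * y 1) * h21 + (x 2 * y 2) * h22

-- determinant / second orthogonality
lemma ortho_flip {A : Matrix (Fin 3) (Fin 3) ℤ} (h : Aᵀ * J3 * A = J3) :
    A * J3 * Aᵀ = J3 := by
  have hJJ : J3 * J3 = 1 := by decide
  have hBA : (J3 * Aᵀ * J3) * A = 1 := by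
    calc (J3 * Aᵀ * J3) * A = J3 * (Aᵀ * J3 * A) := by simp [mul_assoc]
    _ = 1 := by rw [h, hJJ]
  have hAB : A * (J3 * Aᵀ * J3) = 1 := mul_eq_one_comm.mp hBA
  have h2 : A * J3 * Aᵀ * J3 = 1 := by
    calc A * J3 * Aᵀ * J3 = A * (J3 * Aᵀ * J3) := by simp [mul_assoc]
    _ = 1 := hAB
  calc A * J3 * Aᵀ = A * J3 * Aᵀ * J3 * J3 := by simp [mul_assoc, hJJ]
  _ = J3 := by rw [h2, one_mul]

----------------------------------------------------------------
-- core arithmetic positivity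

lemma core_pos {a0 a1 a2 b0 b1 b2 : ℤ} (ha : 1 + a1^2 + a2^2 ≤ a0^2)
    (hb : 1 + b1^2 + b2^2 ≤ b0^2) (ha0 : 1 ≤ a0) (hb0 : 1 ≤ b0) :
    1 ≤ a0*b0 - a1*b1 - a2*b2 := by
  rcases le_or_gt (1 + a1*b1 + a2*b2) 0 with h | h
  · nlinarith
  · nlinarith [sq_nonneg (a1 - b1), sq_nonneg (a2 - b2), sq_nonneg (a1*b2 - a2*b1),
      mul_pos (lt_of_lt_of_le one_pos ha0) (lt_of_lt_of_le one_pos hb0)]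

lemma Q3_self (x : V3) : Q3 x x = x 0 ^2 - x 1 ^2 - x 2 ^2 := by simp [Q3]; ring

-- positivity of 0-th coordinate under Oplus action
lemma mulVec_pos {A : Matrix (Fin 3) (Fin 3) ℤ} (h : Aᵀ * J3 * A = J3) (hA : 0 < A 0 0)
    {x : V3} (hx : 1 ≤ Q3 x x) (hx0 : 1 ≤ x 0) : 1 ≤ (A.mulVec x) 0 := by
  have hrow := congrFun (congrFun (ortho_flip h) 0) 0
  simp [Matrix.mul_apply, Fin.sum_univ_three, J3, Matrix.diagonal, transpose_apply] at hrow
  have h1 : 1 + (-(A 0 1))^2 + (-(A 0 2))^2 ≤ (A 0 0)^2 := by nlinarith [hrow]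
  have h2 : 1 + x 1^2 + x 2^2 ≤ x 0^2 := by rw [Q3_self] at hx; linarith
  have := core_pos h1 h2 hA hx0
  simp only [Matrix.mulVec, dotProduct, Fin.sum_univ_three]
  nlinarith [this]

lemma Q3_pos {x y : V3} (hx : 1 ≤ Q3 x x) (hx0 : 1 ≤ x 0)
    (hy : 1 ≤ Q3 y y) (hy0 : 1 ≤ y 0) : 1 ≤ Q3 x y := by
  have h1 : 1 + x 1^2 + x 2^2 ≤ x 0^2 := by rw [Q3_self] at hx; linarith
  have h2 : 1 + y 1^2 + y 2^2 ≤ y 0^2 := by rw [Q3_self] at hy; linarith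
  have := core_pos h1 h2 hx0 hy0
  simpa [Q3] using this

----------------------------------------------------------------
-- Oplus21 is a subgroup

lemma inv_val_eq {A : MU} (h : (A:Matrix (Fin 3) (Fin 3) ℤ)ᵀ * J3 * A = J3) :
    ((A⁻¹ : MU) : Matrix (Fin 3) (Fin 3) ℤ) = J3 * (A:Matrix (Fin 3) (Fin 3) ℤ)ᵀ * J3 := by
  have hJJ : J3 * J3 = 1 := by decide
  have hBA : (J3 * (A:Matrix (Fin 3) (Fin 3) ℤ)ᵀ * J3) * A = 1 := by
    calc (J3 * (A:Matrix (Fin 3) (Fin 3) ℤ)ᵀ * J3) * A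
        = J3 * ((A:Matrix (Fin 3) (Fin 3) ℤ)ᵀ * J3 * A) := by simp [mul_assoc]
    _ = 1 := by rw [h, hJJ]
  calc ((A⁻¹ : MU) : Matrix (Fin 3) (Fin 3) ℤ)
      = (J3 * (A:Matrix (Fin 3) (Fin 3) ℤ)ᵀ * J3) * ((A : Matrix (Fin 3) (Fin 3) ℤ) * ((A⁻¹ : MU) : Matrix (Fin 3) (Fin 3) ℤ)) := by
        rw [← mul_assoc, hBA, one_mul]
  _ = J3 * (A:Matrix (Fin 3) (Fin 3) ℤ)ᵀ * J3 := by
        rw [← Units.val_mul, mul_inv_cancel, Units.val_one, mul_one]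

def OSub : Subgroup MU where
  carrier := Oplus21
  one_mem' := by constructor <;> simp [Oplus21, J3]
  mul_mem' := by
    rintro a b ⟨ha1, ha2⟩ ⟨hb1, hb2⟩
    constructor
    · show ((a*b : MU) : Matrix (Fin 3) (Fin 3) ℤ)ᵀ * J3 * ((a*b : MU) : Matrix (Fin 3) (Fin 3) ℤ) = J3
      rw [Units.val_mul, transpose_mul]
      calc (b:Matrix (Fin 3) (Fin 3) ℤ)ᵀ * (a:Matrix (Fin 3) (Fin 3) ℤ)ᵀ * J3 * ((a:Matrix (Fin 3) (Fin 3) ℤ) * b)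
          = (b:Matrix (Fin 3) (Fin 3) ℤ)ᵀ * ((a:Matrix (Fin 3) (Fin 3) ℤ)ᵀ * J3 * (a:Matrix (Fin 3) (Fin 3) ℤ)) * b := by simp [mul_assoc]
      _ = J3 := by rw [ha1]; exact hb1
    · show 0 < ((a*b : MU) : Matrix (Fin 3) (Fin 3) ℤ) 0 0
      rw [Units.val_mul]
      have hrow := congrFun (congrFun (ortho_flip ha1) 0) 0
      simp [Matrix.mul_apply, Fin.sum_univ_three, J3, Matrix.diagonal, transpose_apply] at hrow
      have hcol := ortho_entries hb1 0 0
      simp [J3, Matrix.diagonal] at hcol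
      have h1 : 1 + ((a:Matrix (Fin 3) (Fin 3) ℤ) 0 1)^2 + ((a:Matrix (Fin 3) (Fin 3) ℤ) 0 2)^2 ≤ ((a:Matrix (Fin 3) (Fin 3) ℤ) 0 0)^2 := by nlinarith [hrow]
      have h2 : 1 + (-((b:Matrix (Fin 3) (Fin 3) ℤ) 1 0))^2 + (-((b:Matrix (Fin 3) (Fin 3) ℤ) 2 0))^2 ≤ ((b:Matrix (Fin 3) (Fin 3) ℤ) 0 0)^2 := by nlinarith [hcol]
      have := core_pos h1 h2 ha2 hb2
      simp only [Matrix.mul_apply, Fin.sum_univ_three]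
      nlinarith [this]
  inv_mem' := by
    rintro a ⟨ha1, ha2⟩
    have hv := inv_val_eq ha1
    constructor
    · show ((a⁻¹ : MU) : Matrix (Fin 3) (Fin 3) ℤ)ᵀ * J3 * ((a⁻¹ : MU) : Matrix (Fin 3) (Fin 3) ℤ) = J3
      rw [hv]
      have hJJ : J3 * J3 = 1 := by decide
      have hJt : J3ᵀ = J3 := by decide
      have hflip := ortho_flip ha1
      calc (J3 * (a:Matrix (Fin 3) (Fin 3) ℤ)ᵀ * J3)ᵀ * J3 * (J3 * (a:Matrix (Fin 3) (Fin 3) ℤ)ᵀ * J3)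
          = J3 * ((a:Matrix (Fin 3) (Fin 3) ℤ) * J3 * (a:Matrix (Fin 3) (Fin 3) ℤ)ᵀ) * J3 := by
            simp [transpose_mul, hJt, mul_assoc, hJJ]
      _ = J3 := by rw [hflip, hJJ, one_mul]
    · show 0 < ((a⁻¹ : MU) : Matrix (Fin 3) (Fin 3) ℤ) 0 0
      rw [hv]
      have : (J3 * (a:Matrix (Fin 3) (Fin 3) ℤ)ᵀ * J3) 0 0 = (a:Matrix (Fin 3) (Fin 3) ℤ) 0 0 := by
        simp [Matrix.mul_apply, Fin.sum_univ_three, J3, Matrix.diagonal, transpose_apply]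
      rw [this]; exact ha2

----------------------------------------------------------------
-- the three reflections: action and basic facts

lemma r1_ortho : (refE2 : Matrix (Fin 3) (Fin 3) ℤ)ᵀ * J3 * refE2 = J3 := by decide
lemma r2_ortho : (refE1E2 : Matrix (Fin 3) (Fin 3) ℤ)ᵀ * J3 * refE1E2 = J3 := by decide
lemma r3_ortho : (refHE1E2 : Matrix (Fin 3) (Fin 3) ℤ)ᵀ * J3 * refHE1E2 = J3 := by decide

lemma r1_mem : refE2 ∈ OSub := ⟨r1_ortho, by rw [refE2_val]; decide⟩
lemma r2_mem : refE1E2 ∈ OSub := ⟨r2_ortho, by rw [refE1E2_val]; decide⟩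
lemma r3_mem : refHE1E2 ∈ OSub := ⟨r3_ortho, by rw [refHE1E2_val]; decide⟩

lemma r1_act (x : V3) : (refE2 : Matrix (Fin 3) (Fin 3) ℤ).mulVec x = ![x 0, x 1, -(x 2)] := by
  funext i
  fin_cases i <;> simp [refE2_val, Matrix.mulVec, dotProduct, Fin.sum_univ_three]

lemma r2_act (x : V3) : (refE1E2 : Matrix (Fin 3) (Fin 3) ℤ).mulVec x = ![x 0, x 2, x 1] := by
  funext i
  fin_cases i <;> simp [refE1E2_val, Matrix.mulVec, dotProduct, Fin.sum_univ_three]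

lemma r3_act (x : V3) : (refHE1E2 : Matrix (Fin 3) (Fin 3) ℤ).mulVec x =
    ![x 0 + 2*(x 0 + x 1 + x 2), x 1 - 2*(x 0 + x 1 + x 2), x 2 - 2*(x 0 + x 1 + x 2)] := by
  funext i
  fin_cases i <;> simp [refHE1E2_val, Matrix.mulVec, dotProduct, Fin.sum_univ_three] <;> ring

lemma r1_sq : refE2 * refE2 = 1 := by
  ext : 1; rw [Units.val_mul, refE2_val]; decide
lemma r2_sq : refE1E2 * refE1E2 = 1 := by
  ext : 1; rw [Units.val_mul, refE1E2_val]; decide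
lemma r3_sq : refHE1E2 * refHE1E2 = 1 := by
  ext : 1; rw [Units.val_mul, refHE1E2_val]; decide

----------------------------------------------------------------
-- stabilizer subgroup, W, Sw

def stabSub (w : V3) : Subgroup MU where
  carrier := {A | (A : Matrix (Fin 3) (Fin 3) ℤ).mulVec w = w}
  one_mem' := by simp
  mul_mem' := by
    intro a b ha hb
    show ((a*b : MU) : Matrix (Fin 3) (Fin 3) ℤ).mulVec w = w
    rw [Units.val_mul, ← Matrix.mulVec_mulVec]
    rw [show (b : Matrix (Fin 3) (Fin 3) ℤ).mulVec w = w from hb]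
    exact ha
  inv_mem' := by
    intro a ha
    show ((a⁻¹ : MU) : Matrix (Fin 3) (Fin 3) ℤ).mulVec w = w
    conv_lhs => rw [← (show (a : Matrix (Fin 3) (Fin 3) ℤ).mulVec w = w from ha)]
    rw [Matrix.mulVec_mulVec, ← Units.val_mul, inv_mul_cancel, Units.val_one, Matrix.one_mulVec]

def Wgrp : Subgroup MU := Subgroup.closure {refE2, refE1E2, refHE1E2}

def SwGrp (w : V3) : Subgroup MU :=
  Subgroup.closure {A | A ∈ ({refE2, refE1E2, refHE1E2} : Set MU) ∧
    (A : Matrix (Fin 3) (Fin 3) ℤ).mulVec w = w}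

lemma Wgrp_le_OSub : Wgrp ≤ OSub := by
  rw [Wgrp, Subgroup.closure_le]
  rintro A (rfl | rfl | rfl)
  exacts [r1_mem, r2_mem, r3_mem]

lemma SwGrp_le_Wgrp (w : V3) : SwGrp w ≤ Wgrp :=
  Subgroup.closure_mono (fun A hA => hA.1)

lemma SwGrp_le_stab (w : V3) : SwGrp w ≤ stabSub w := by
  rw [SwGrp, Subgroup.closure_le]
  exact fun A hA => hA.2

----------------------------------------------------------------
-- chamber

def inC (w : V3) : Prop := w 1 ≤ w 2 ∧ w 2 ≤ 0 ∧ 0 ≤ w 0 + w 1 + w 2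

lemma chamber_unit {q : V3} (hC : inC q) (hQ : Q3 q q = 1) (h0 : 1 ≤ q 0) : q = ee0 := by
  obtain ⟨h1, h2, h3⟩ := hC
  rw [Q3_self] at hQ
  have hq2 : q 2 = 0 := by nlinarith [sq_nonneg (q 0 + q 1 + q 2), mul_nonneg (mul_nonneg (neg_nonneg.2 (h1.trans h2)) (neg_nonneg.2 h2)) (le_of_lt (lt_of_lt_of_le one_pos h0))]
  have hfac : (q 0 - q 1) * (q 0 + q 1) = 1 := by nlinarith [hQ]
  have hq1 : q 1 = 0 ∧ q 0 = 1 := by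
    rcases Int.mul_eq_one_iff_eq_one_or_neg_one.mp hfac with ⟨ha, hb⟩ | ⟨ha, hb⟩ <;> constructor <;> omega
  funext i
  fin_cases i <;> simp [ee0, hq1.1, hq1.2, hq2]

----------------------------------------------------------------
-- coordinate bounds for timelike future vectors

lemma coord_bounds {q : V3} (hQ : 1 ≤ Q3 q q) (h0 : 1 ≤ q 0) :
    1 - q 0 ≤ q 1 ∧ q 1 ≤ q 0 - 1 ∧ 1 - q 0 ≤ q 2 ∧ q 2 ≤ q 0 - 1 := by
  rw [Q3_self] at hQ
  refine ⟨?_, ?_, ?_, ?_⟩ <;> nlinarith [sq_nonneg (q 1 + q 0), sq_nonneg (q 1 - q 0),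
    sq_nonneg (q 2 + q 0), sq_nonneg (q 2 - q 0), sq_nonneg (q 1), sq_nonneg (q 2)]

def mu2 (q : V3) : ℤ := (q 1 + q 2 + 2*q 0)*(4*q 0+1) + (q 1 + q 0)

lemma mu2_pos {q : V3} (hQ : 1 ≤ Q3 q q) (h0 : 1 ≤ q 0) : 1 ≤ mu2 q := by
  obtain ⟨b1, b2, b3, b4⟩ := coord_bounds hQ h0
  have h5 : 2 ≤ q 1 + q 2 + 2*q 0 := by linarith
  have h6 : 5 ≤ 4*q 0 + 1 := by linarith
  have : 10 ≤ (q 1 + q 2 + 2*q 0)*(4*q 0+1) := by nlinarith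
  have h7 : 1 ≤ q 1 + q 0 := by linarith
  simp only [mu2]; linarith

lemma gen1 : refE2 ∈ ({refE2, refE1E2, refHE1E2} : Set MU) := by simp
lemma gen2 : refE1E2 ∈ ({refE2, refE1E2, refHE1E2} : Set MU) := by simp
lemma gen3 : refHE1E2 ∈ ({refE2, refE1E2, refHE1E2} : Set MU) := by simp

lemma step_lift {q : V3} {r u : MU} (hC : inC ((u : Matrix (Fin 3) (Fin 3) ℤ).mulVec ((r : Matrix (Fin 3) (Fin 3) ℤ).mulVec q))) :
    inC (((u*r : MU) : Matrix (Fin 3) (Fin 3) ℤ).mulVec q) := by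
  rw [Units.val_mul, ← Matrix.mulVec_mulVec]; exact hC

lemma reduce_rec (n : ℕ) : ∀ m : ℕ, ∀ q : V3, (q 0).toNat ≤ n → (mu2 q).toNat ≤ m →
    1 ≤ Q3 q q → 1 ≤ q 0 → ∃ u ∈ Wgrp, inC ((u : Matrix (Fin 3) (Fin 3) ℤ).mulVec q) := by
  induction n with
  | zero => intro m q hn _ _ h0; exfalso; omega
  | succ n ihn =>
    intro m
    induction m with
    | zero =>
      intro q hn hm hQ h0; exfalso
      have := mu2_pos hQ h0; omega
    | succ m ihm =>
      intro q hn hm hQ h0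
      by_cases h3 : 0 ≤ q 0 + q 1 + q 2
      · by_cases h1 : q 1 ≤ q 2
        · by_cases h2 : q 2 ≤ 0
          · exact ⟨1, one_mem _, by rw [Units.val_one, Matrix.one_mulVec]; exact (⟨h1, h2, h3⟩ : inC q)⟩
          · -- r1 step, q 2 ≥ 1
            push_neg at h2
            set q' := (refE2 : Matrix (Fin 3) (Fin 3) ℤ).mulVec q with hq'
            have hval : q' = ![q 0, q 1, -(q 2)] := r1_act q
            have hQ' : 1 ≤ Q3 q' q' := by rw [hq', Q3_mulVec r1_ortho]; exact hQ
            have h0' : 1 ≤ q' 0 := mulVec_pos r1_ortho (by rw [refE2_val]; decide) hQ h0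
            have hmu : mu2 q' < mu2 q := by
              simp only [mu2, hval]
              simp only [Matrix.cons_val_zero, Matrix.cons_val_one, Matrix.head_cons,
                Matrix.cons_val_two, Matrix.tail_cons]
              nlinarith [h2, h0]
            have h0eq : q' 0 = q 0 := by rw [hval]; rfl
            obtain ⟨u, hu, hC⟩ := ihm q' (by omega) (by have := mu2_pos hQ' h0'; omega) hQ' h0'
            exact ⟨u * refE2, mul_mem hu (Subgroup.subset_closure gen1), step_lift hC⟩
        · -- r2 step, q 1 > q 2
          push_neg at h1
          set q' := (refE1E2 : Matrix (Fin 3) (Fin 3) ℤ).mulVec q with hq'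
          have hval : q' = ![q 0, q 2, q 1] := r2_act q
          have hQ' : 1 ≤ Q3 q' q' := by rw [hq', Q3_mulVec r2_ortho]; exact hQ
          have h0' : 1 ≤ q' 0 := mulVec_pos r2_ortho (by rw [refE1E2_val]; decide) hQ h0
          have hmu : mu2 q' < mu2 q := by
            simp only [mu2, hval]
            simp only [Matrix.cons_val_zero, Matrix.cons_val_one, Matrix.head_cons,
              Matrix.cons_val_two, Matrix.tail_cons]
            nlinarith [h1]
          have h0eq : q' 0 = q 0 := by rw [hval]; rfl
          obtain ⟨u, hu, hC⟩ := ihm q' (by omega) (by have := mu2_pos hQ' h0'; omega) hQ' h0'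
          exact ⟨u * refE1E2, mul_mem hu (Subgroup.subset_closure gen2), step_lift hC⟩
      · -- r3 step, s ≤ -1
        push_neg at h3
        set q' := (refHE1E2 : Matrix (Fin 3) (Fin 3) ℤ).mulVec q with hq'
        have hval : q' = ![q 0 + 2*(q 0 + q 1 + q 2), q 1 - 2*(q 0 + q 1 + q 2), q 2 - 2*(q 0 + q 1 + q 2)] := r3_act q
        have hQ' : 1 ≤ Q3 q' q' := by rw [hq', Q3_mulVec r3_ortho]; exact hQ
        have h0' : 1 ≤ q' 0 := mulVec_pos r3_ortho (by rw [refHE1E2_val]; decide) hQ h0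
        have h0lt : q' 0 ≤ q 0 - 2 := by rw [hval]; show q 0 + 2*(q 0 + q 1 + q 2) ≤ q 0 - 2; linarith
        obtain ⟨u, hu, hC⟩ := ihn (mu2 q').toNat q' (by omega) le_rfl hQ' h0'
        exact ⟨u * refHE1E2, mul_mem hu (Subgroup.subset_closure gen3), step_lift hC⟩

lemma reduce {q : V3} (hQ : 1 ≤ Q3 q q) (h0 : 1 ≤ q 0) :
    ∃ u ∈ Wgrp, inC ((u : Matrix (Fin 3) (Fin 3) ℤ).mulVec q) :=
  reduce_rec (q 0).toNat (mu2 q).toNat q le_rfl le_rfl hQ h0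

----------------------------------------------------------------
-- minimality of Q3 ee0 w over the orbit of unit future vectors

lemma SwGrp_Q3 {w : V3} {u : MU} (hu : u ∈ SwGrp w) :
    Q3 ((u : Matrix (Fin 3) (Fin 3) ℤ).mulVec ee0) w = Q3 ee0 w := by
  have h1 : u ∈ OSub := Wgrp_le_OSub (SwGrp_le_Wgrp w hu)
  have h2 : (u : Matrix (Fin 3) (Fin 3) ℤ).mulVec w = w := SwGrp_le_stab w hu
  conv_lhs => rw [← h2]
  exact Q3_mulVec h1.1 ee0 w

set_option maxHeartbeats 2000000 in
lemma minQ_rec (w : V3) (hw : inC w) (n : ℕ) : ∀ m : ℕ, ∀ q : V3,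
    (q 0).toNat ≤ n → (mu2 q).toNat ≤ m → Q3 q q = 1 → 1 ≤ q 0 →
    (∃ u ∈ SwGrp w, q = (u : Matrix (Fin 3) (Fin 3) ℤ).mulVec ee0) ∨ Q3 ee0 w < Q3 q w := by
  obtain ⟨hcw1, hcw2, hcw3⟩ := hw
  induction n with
  | zero => intro m q hn _ _ h0; exfalso; omega
  | succ n ihn =>
    intro m
    induction m with
    | zero =>
      intro q hn hm hQ h0; exfalso
      have := mu2_pos (le_of_eq hQ.symm) h0; omega
    | succ m ihm =>
      intro q hn hm hQ h0
      have hQ1 : 1 ≤ Q3 q q := le_of_eq hQ.symm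
      by_cases h3 : 0 ≤ q 0 + q 1 + q 2
      · by_cases h1 : q 1 ≤ q 2
        · by_cases h2 : q 2 ≤ 0
          · left
            refine ⟨1, one_mem _, ?_⟩
            rw [chamber_unit ⟨h1, h2, h3⟩ hQ h0]
            simp
          · -- r1 step, q 2 ≥ 1
            push_neg at h2
            set q' := (refE2 : Matrix (Fin 3) (Fin 3) ℤ).mulVec q with hq'def
            have hval : q' = ![q 0, q 1, -(q 2)] := r1_act q
            have hQ' : Q3 q' q' = 1 := by rw [hq'def, Q3_mulVec r1_ortho]; exact hQ
            have h0' : 1 ≤ q' 0 := mulVec_pos r1_ortho (by rw [refE2_val]; decide) hQ1 h0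
            have hdiff : Q3 q w - Q3 q' w = -(2 * q 2 * w 2) := by
              rw [hval]; simp [Q3]; ring
            have hmu : mu2 q' < mu2 q := by
              simp only [mu2, hval]
              simp only [Matrix.cons_val_zero, Matrix.cons_val_one, Matrix.head_cons,
                Matrix.cons_val_two, Matrix.tail_cons]
              nlinarith [h2, h0]
            have h0eq : q' 0 = q 0 := by rw [hval]; rfl
            have hQ1' : 1 ≤ Q3 q' q' := le_of_eq hQ'.symm
            have IH := ihm q' (by omega) (by have := mu2_pos hQ1' h0'; omega) hQ' h0'
            by_cases hwall : w 2 = 0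
            · have hfix : (refE2 : Matrix (Fin 3) (Fin 3) ℤ).mulVec w = w := by
                rw [r1_act]; funext i; fin_cases i <;> simp [hwall]
              rcases IH with ⟨u', hu', hq'⟩ | hgt
              · left
                refine ⟨refE2 * u', mul_mem (Subgroup.subset_closure ⟨gen1, hfix⟩) hu', ?_⟩
                have hback : (refE2 : Matrix (Fin 3) (Fin 3) ℤ).mulVec q' = q := by
                  rw [hq'def, Matrix.mulVec_mulVec, ← Units.val_mul, r1_sq, Units.val_one,
                    Matrix.one_mulVec]
                rw [← hback, hq', Matrix.mulVec_mulVec, ← Units.val_mul]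
              · right
                have h0w : Q3 q w - Q3 q' w = 0 := by rw [hdiff, hwall]; ring
                linarith [hgt]
            · have hw2 : w 2 < 0 := lt_of_le_of_ne hcw2 hwall
              have hlt : Q3 q' w < Q3 q w := by nlinarith [hdiff, h2, hw2]
              right
              rcases IH with ⟨u', hu', hq'⟩ | hgt
              · rw [hq', SwGrp_Q3 hu'] at hlt; exact hlt
              · linarith
        · -- r2 step, q 1 > q 2
          push_neg at h1
          set q' := (refE1E2 : Matrix (Fin 3) (Fin 3) ℤ).mulVec q with hq'def
          have hval : q' = ![q 0, q 2, q 1] := r2_act q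
          have hQ' : Q3 q' q' = 1 := by rw [hq'def, Q3_mulVec r2_ortho]; exact hQ
          have h0' : 1 ≤ q' 0 := mulVec_pos r2_ortho (by rw [refE1E2_val]; decide) hQ1 h0
          have hdiff : Q3 q w - Q3 q' w = (q 1 - q 2) * (w 2 - w 1) := by
            rw [hval]; simp [Q3]; ring
          have hmu : mu2 q' < mu2 q := by
            simp only [mu2, hval]
            simp only [Matrix.cons_val_zero, Matrix.cons_val_one, Matrix.head_cons,
              Matrix.cons_val_two, Matrix.tail_cons]
            nlinarith [h1]
          have h0eq : q' 0 = q 0 := by rw [hval]; rfl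
          have hQ1' : 1 ≤ Q3 q' q' := le_of_eq hQ'.symm
          have IH := ihm q' (by omega) (by have := mu2_pos hQ1' h0'; omega) hQ' h0'
          by_cases hwall : w 1 = w 2
          · have hfix : (refE1E2 : Matrix (Fin 3) (Fin 3) ℤ).mulVec w = w := by
              rw [r2_act]; funext i; fin_cases i <;> simp [hwall]
            rcases IH with ⟨u', hu', hq'⟩ | hgt
            · left
              refine ⟨refE1E2 * u', mul_mem (Subgroup.subset_closure ⟨gen2, hfix⟩) hu', ?_⟩
              have hback : (refE1E2 : Matrix (Fin 3) (Fin 3) ℤ).mulVec q' = q := by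
                rw [hq'def, Matrix.mulVec_mulVec, ← Units.val_mul, r2_sq, Units.val_one,
                  Matrix.one_mulVec]
              rw [← hback, hq', Matrix.mulVec_mulVec, ← Units.val_mul]
            · right; nlinarith [hgt, hdiff, h1, hwall.le, hwall.ge]
          · have hw12 : w 1 < w 2 := lt_of_le_of_ne hcw1 hwall
            have hlt : Q3 q' w < Q3 q w := by nlinarith [hdiff, h1, hw12]
            right
            rcases IH with ⟨u', hu', hq'⟩ | hgt
            · rw [hq', SwGrp_Q3 hu'] at hlt; exact hlt
            · linarith
      · -- r3 step
        push_neg at h3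
        set q' := (refHE1E2 : Matrix (Fin 3) (Fin 3) ℤ).mulVec q with hq'def
        have hval : q' = ![q 0 + 2*(q 0 + q 1 + q 2), q 1 - 2*(q 0 + q 1 + q 2), q 2 - 2*(q 0 + q 1 + q 2)] :=
          r3_act q
        have hQ' : Q3 q' q' = 1 := by rw [hq'def, Q3_mulVec r3_ortho]; exact hQ
        have h0' : 1 ≤ q' 0 := mulVec_pos r3_ortho (by rw [refHE1E2_val]; decide) hQ1 h0
        have hdiff : Q3 q w - Q3 q' w = -(2 * (q 0 + q 1 + q 2) * (w 0 + w 1 + w 2)) := by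
          rw [hval]; simp [Q3]; ring
        have h0lt : q' 0 ≤ q 0 - 2 := by
          rw [hval]; show q 0 + 2*(q 0 + q 1 + q 2) ≤ q 0 - 2; linarith
        have hQ1' : 1 ≤ Q3 q' q' := le_of_eq hQ'.symm
        have IH := ihn (mu2 q').toNat q' (by omega) le_rfl hQ' h0'
        by_cases hwall : w 0 + w 1 + w 2 = 0
        · have hfix : (refHE1E2 : Matrix (Fin 3) (Fin 3) ℤ).mulVec w = w := by
            rw [r3_act]; funext i; fin_cases i <;> simp [hwall]
          rcases IH with ⟨u', hu', hq'⟩ | hgt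
          · left
            refine ⟨refHE1E2 * u', mul_mem (Subgroup.subset_closure ⟨gen3, hfix⟩) hu', ?_⟩
            have hback : (refHE1E2 : Matrix (Fin 3) (Fin 3) ℤ).mulVec q' = q := by
              rw [hq'def, Matrix.mulVec_mulVec, ← Units.val_mul, r3_sq, Units.val_one,
                Matrix.one_mulVec]
            rw [← hback, hq', Matrix.mulVec_mulVec, ← Units.val_mul]
          · right; nlinarith [hgt, hdiff, h3, hwall.le, hwall.ge]
        · have hsw : 0 < w 0 + w 1 + w 2 := lt_of_le_of_ne hcw3 (Ne.symm hwall)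
          have hlt : Q3 q' w < Q3 q w := by nlinarith [hdiff, h3, hsw]
          right
          rcases IH with ⟨u', hu', hq'⟩ | hgt
          · rw [hq', SwGrp_Q3 hu'] at hlt; exact hlt
          · linarith

lemma min_orbit {w : V3} (hw : inC w) {q : V3} (hQ : Q3 q q = 1) (h0 : 1 ≤ q 0) :
    (∃ u ∈ SwGrp w, q = (u : Matrix (Fin 3) (Fin 3) ℤ).mulVec ee0) ∨ Q3 ee0 w < Q3 q w :=
  minQ_rec w hw (q 0).toNat (mu2 q).toNat q le_rfl le_rfl hQ h0

----------------------------------------------------------------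
-- pinning down stabilizers

def ee1 : V3 := ![0,1,0]
def ee2 : V3 := ![0,0,1]

def K1grp : Subgroup MU := Subgroup.closure {refE1E2, refE2}
def K2grp : Subgroup MU := Subgroup.closure {refHE1E2, refE1E2}

lemma r1_K1 : refE2 ∈ K1grp := Subgroup.subset_closure (by simp)
lemma r2_K1 : refE1E2 ∈ K1grp := Subgroup.subset_closure (by simp)
lemma r2_K2 : refE1E2 ∈ K2grp := Subgroup.subset_closure (by simp)
lemma r3_K2 : refHE1E2 ∈ K2grp := Subgroup.subset_closure (by simp)

lemma unit_eq_one_of_fix {A : MU} (h0 : (A : Matrix (Fin 3) (Fin 3) ℤ).mulVec ee0 = ee0)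
    (h1 : (A : Matrix (Fin 3) (Fin 3) ℤ).mulVec ee1 = ee1)
    (h2 : (A : Matrix (Fin 3) (Fin 3) ℤ).mulVec ee2 = ee2) : A = 1 := by
  apply Units.ext
  show (A : Matrix (Fin 3) (Fin 3) ℤ) = 1
  ext i j
  have c0 := congrFun h0 i
  have c1 := congrFun h1 i
  have c2 := congrFun h2 i
  simp [Matrix.mulVec, dotProduct, Fin.sum_univ_three, ee0, ee1, ee2] at c0 c1 c2
  fin_cases i <;> fin_cases j <;>
    simp_all [Matrix.one_apply, ee0, ee1, ee2] <;> rfl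

lemma sq_one_cases {b : ℤ} (h : b^2 = 1) : b = 1 ∨ b = -1 := by
  have : (b-1)*(b+1) = 0 := by nlinarith
  rcases mul_eq_zero.mp this with h | h
  · left; linarith
  · right; linarith

lemma img_e1_cases {A : MU} (hA : A ∈ OSub)
    (hfix : (A : Matrix (Fin 3) (Fin 3) ℤ).mulVec ee0 = ee0) :
    (A : Matrix (Fin 3) (Fin 3) ℤ).mulVec ee1 = ee1 ∨
    (A : Matrix (Fin 3) (Fin 3) ℤ).mulVec ee1 = -ee1 ∨
    (A : Matrix (Fin 3) (Fin 3) ℤ).mulVec ee1 = ee2 ∨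
    (A : Matrix (Fin 3) (Fin 3) ℤ).mulVec ee1 = -ee2 := by
  set x := (A : Matrix (Fin 3) (Fin 3) ℤ).mulVec ee1 with hx
  have hQx : Q3 x x = -1 := by rw [hx, Q3_mulVec hA.1]; decide
  have hQ0 : Q3 x ee0 = 0 := by
    rw [hx]; conv_lhs => rw [show ee0 = (A : Matrix (Fin 3) (Fin 3) ℤ).mulVec ee0 from hfix.symm]
    rw [Q3_mulVec hA.1]; decide
  have hx0 : x 0 = 0 := by simpa [Q3, ee0] using hQ0
  have hx12 : x 1^2 + x 2^2 = 1 := by rw [Q3_self] at hQx; nlinarith [hQx, hx0]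
  have hb1 : -1 ≤ x 1 ∧ x 1 ≤ 1 := by constructor <;> nlinarith [sq_nonneg (x 2)]
  have veq : ∀ a b : ℤ, x 1 = a → x 2 = b → x = ![0, a, b] := by
    intro a b h1 h2; funext i; fin_cases i <;> simp [hx0, h1, h2]
  rcases (by omega : x 1 = -1 ∨ x 1 = 0 ∨ x 1 = 1) with h1 | h1 | h1
  · have h2 : x 2 = 0 := by nlinarith
    right; left; rw [veq _ _ h1 h2]; funext i; fin_cases i <;> simp [ee1]
  · have h2 : x 2 = 1 ∨ x 2 = -1 := sq_one_cases (by nlinarith)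
    rcases h2 with h2 | h2
    · right; right; left; rw [veq _ _ h1 h2]; funext i; fin_cases i <;> simp [ee2]
    · right; right; right; rw [veq _ _ h1 h2]; funext i; fin_cases i <;> simp [ee2]
  · have h2 : x 2 = 0 := by nlinarith
    left; rw [veq _ _ h1 h2]; funext i; fin_cases i <;> simp [ee1]

lemma img_e2_cases {A : MU} (hA : A ∈ OSub)
    (hfix : (A : Matrix (Fin 3) (Fin 3) ℤ).mulVec ee0 = ee0)
    (hfix1 : (A : Matrix (Fin 3) (Fin 3) ℤ).mulVec ee1 = ee1) :
    (A : Matrix (Fin 3) (Fin 3) ℤ).mulVec ee2 = ee2 ∨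
    (A : Matrix (Fin 3) (Fin 3) ℤ).mulVec ee2 = -ee2 := by
  set y := (A : Matrix (Fin 3) (Fin 3) ℤ).mulVec ee2 with hy
  have hQy : Q3 y y = -1 := by rw [hy, Q3_mulVec hA.1]; decide
  have hQ0 : Q3 y ee0 = 0 := by
    rw [hy]; conv_lhs => rw [show ee0 = (A : Matrix (Fin 3) (Fin 3) ℤ).mulVec ee0 from hfix.symm]
    rw [Q3_mulVec hA.1]; decide
  have hQ1 : Q3 y ee1 = 0 := by
    rw [hy]; conv_lhs => rw [show ee1 = (A : Matrix (Fin 3) (Fin 3) ℤ).mulVec ee1 from hfix1.symm]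
    rw [Q3_mulVec hA.1]; decide
  have hy0 : y 0 = 0 := by simpa [Q3, ee0] using hQ0
  have hy1 : y 1 = 0 := by
    have := hQ1; simp [Q3, ee1] at this; linarith
  have hy2 : y 2 = 1 ∨ y 2 = -1 := by
    apply sq_one_cases; rw [Q3_self] at hQy; nlinarith
  rcases hy2 with h | h
  · left; funext i; fin_cases i <;> simp [hy0, hy1, h, ee2]
  · right; funext i; fin_cases i <;> simp [hy0, hy1, h, ee2]

lemma mulVec_unit_mul (a b : MU) (z : V3) :
    ((a*b : MU) : Matrix (Fin 3) (Fin 3) ℤ).mulVec z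
      = (a : Matrix (Fin 3) (Fin 3) ℤ).mulVec ((b : Matrix (Fin 3) (Fin 3) ℤ).mulVec z) := by
  rw [Units.val_mul, ← Matrix.mulVec_mulVec]

-- corrector matrices
lemma flip1_val : ((refE1E2 * refE2 * refE1E2 : MU) : Matrix (Fin 3) (Fin 3) ℤ)
    = !![1,0,0;0,-1,0;0,0,1] := by
  rw [Units.val_mul, Units.val_mul, refE1E2_val, refE2_val]; decide

lemma r2r1_val : ((refE1E2 * refE2 : MU) : Matrix (Fin 3) (Fin 3) ℤ)
    = !![1,0,0;0,0,-1;0,1,0] := by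
  rw [Units.val_mul, refE1E2_val, refE2_val]; decide

lemma stab_e0e1_K1 {B : MU} (hB : B ∈ OSub)
    (h0 : (B : Matrix (Fin 3) (Fin 3) ℤ).mulVec ee0 = ee0)
    (h1 : (B : Matrix (Fin 3) (Fin 3) ℤ).mulVec ee1 = ee1) : B ∈ K1grp := by
  rcases img_e2_cases hB h0 h1 with h2 | h2
  · rw [unit_eq_one_of_fix h0 h1 h2]; exact one_mem _
  · have hB' : refE2 * B = 1 := by
      apply unit_eq_one_of_fix <;> rw [mulVec_unit_mul] <;>
        rw [show ∀ z, (refE2 : Matrix (Fin 3) (Fin 3) ℤ).mulVec z = ![z 0, z 1, -(z 2)] from r1_act]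
      · rw [h0]; funext i; fin_cases i <;> simp [ee0]
      · rw [h1]; funext i; fin_cases i <;> simp [ee1]
      · rw [h2]; funext i; fin_cases i <;> simp [ee2]
    have : B = refE2⁻¹ := eq_inv_of_mul_eq_one_right hB'
    rw [this]; exact inv_mem r1_K1

lemma stab_e0_K1 {A : MU} (hA : A ∈ OSub)
    (hfix : (A : Matrix (Fin 3) (Fin 3) ℤ).mulVec ee0 = ee0) : A ∈ K1grp := by
  have conclude : ∀ c : MU, c ∈ K1grp → c ∈ OSub →
      (c : Matrix (Fin 3) (Fin 3) ℤ).mulVec ee0 = ee0 →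
      (c : Matrix (Fin 3) (Fin 3) ℤ).mulVec ((A : Matrix (Fin 3) (Fin 3) ℤ).mulVec ee1) = ee1 →
      A ∈ K1grp := by
    intro c hcK hcO hc0 hc1
    have hB : c * A ∈ K1grp := by
      apply stab_e0e1_K1 (mul_mem hcO hA)
      · rw [mulVec_unit_mul, hfix, hc0]
      · rw [mulVec_unit_mul, hc1]
    have : A = c⁻¹ * (c * A) := by group
    rw [this]; exact mul_mem (inv_mem hcK) hB
  rcases img_e1_cases hA hfix with h | h | h | h
  · apply conclude 1 (one_mem _) (one_mem _) (by simp) (by rw [h]; simp)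
  · apply conclude (refE1E2 * refE2 * refE1E2)
      (mul_mem (mul_mem r2_K1 r1_K1) r2_K1)
      (mul_mem (mul_mem r2_mem r1_mem) r2_mem)
      (by rw [flip1_val]; decide)
      (by rw [h, flip1_val]; decide)
  · apply conclude refE1E2 r2_K1 r2_mem
      (by rw [refE1E2_val]; decide) (by rw [h, refE1E2_val]; decide)
  · apply conclude (refE1E2 * refE2) (mul_mem r2_K1 r1_K1) (mul_mem r2_mem r1_mem)
      (by rw [r2r1_val]; decide) (by rw [h, r2r1_val]; decide)

----------------------------------------------------------------
-- stabilizer of the vertex-B point w2v = (2,-1,-1)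

def uu : V3 := ![0,1,-1]
def vv : V3 := ![1,-1,-1]
def w2v : V3 := ![2,-1,-1]

lemma r2_inv : refE1E2⁻¹ = refE1E2 := by
  rw [eq_comm, eq_inv_iff_mul_eq_one]; exact r2_sq
lemma r1_inv : refE2⁻¹ = refE2 := by
  rw [eq_comm, eq_inv_iff_mul_eq_one]; exact r1_sq
lemma r3_inv : refHE1E2⁻¹ = refHE1E2 := by
  rw [eq_comm, eq_inv_iff_mul_eq_one]; exact r3_sq

lemma fix_uvw_eq_one {B : MU} (hw : (B : Matrix (Fin 3) (Fin 3) ℤ).mulVec w2v = w2v)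
    (hv : (B : Matrix (Fin 3) (Fin 3) ℤ).mulVec vv = vv)
    (hu : (B : Matrix (Fin 3) (Fin 3) ℤ).mulVec uu = uu) : B = 1 := by
  have lin : ∀ x y : V3, (B : Matrix (Fin 3) (Fin 3) ℤ).mulVec (x - y)
      = (B : Matrix (Fin 3) (Fin 3) ℤ).mulVec x - (B : Matrix (Fin 3) (Fin 3) ℤ).mulVec y := by
    intro x y; rw [Matrix.mulVec_sub]
  have lin2 : ∀ x y : V3, (B : Matrix (Fin 3) (Fin 3) ℤ).mulVec (x + y)
      = (B : Matrix (Fin 3) (Fin 3) ℤ).mulVec x + (B : Matrix (Fin 3) (Fin 3) ℤ).mulVec y := by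
    intro x y; rw [Matrix.mulVec_add]
  have h0 : (B : Matrix (Fin 3) (Fin 3) ℤ).mulVec ee0 = ee0 := by
    have : ee0 = w2v - vv := by funext i; fin_cases i <;> simp [ee0, w2v, vv]
    rw [this, lin, hw, hv]
  have h1 : (B : Matrix (Fin 3) (Fin 3) ℤ).mulVec ee1 = ee1 := by
    have h2e1 : (2:ℤ) • ee1 = uu - vv + ee0 := by funext i; fin_cases i <;> simp [ee1, uu, vv, ee0]
    have := congrArg (fun z => (B : Matrix (Fin 3) (Fin 3) ℤ).mulVec z) h2e1
    simp only [Matrix.mulVec_smul] at this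
    rw [lin2, lin, hu, hv, h0] at this
    rw [← h2e1] at this
    have h2 := congrFun this
    funext i
    have := h2 i
    simp only [Pi.smul_apply, smul_eq_mul] at this
    omega
  have h2 : (B : Matrix (Fin 3) (Fin 3) ℤ).mulVec ee2 = ee2 := by
    have h2e2 : (2:ℤ) • ee2 = ee0 - uu - vv := by funext i; fin_cases i <;> simp [ee2, uu, vv, ee0]
    have := congrArg (fun z => (B : Matrix (Fin 3) (Fin 3) ℤ).mulVec z) h2e2
    simp only [Matrix.mulVec_smul] at this
    rw [lin, lin, h0, hu, hv] at this
    rw [← h2e2] at this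
    have h2 := congrFun this
    funext i
    have := h2 i
    simp only [Pi.smul_apply, smul_eq_mul] at this
    omega
  exact unit_eq_one_of_fix h0 h1 h2

lemma img_vv_cases {A : MU} (hA : A ∈ OSub)
    (hw : (A : Matrix (Fin 3) (Fin 3) ℤ).mulVec w2v = w2v) :
    (A : Matrix (Fin 3) (Fin 3) ℤ).mulVec vv = vv ∨
    (A : Matrix (Fin 3) (Fin 3) ℤ).mulVec vv = -vv := by
  set x := (A : Matrix (Fin 3) (Fin 3) ℤ).mulVec vv with hx
  have hQx : Q3 x x = -1 := by rw [hx, Q3_mulVec hA.1]; decide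
  have hQw : Q3 x w2v = 0 := by
    rw [hx]; conv_lhs => rw [show w2v = (A : Matrix (Fin 3) (Fin 3) ℤ).mulVec w2v from hw.symm]
    rw [Q3_mulVec hA.1]; decide
  -- 2 x0 + x1 + x2 = 0  and  x0² - x1² - x2² = -1
  have e1 : 2 * x 0 + x 1 + x 2 = 0 := by simp [Q3, w2v] at hQw; linarith
  have e2 : x 0^2 - x 1^2 - x 2^2 = -1 := by rw [Q3_self] at hQx; linarith
  -- z := x + c·vv with c = x0+x1+x2 = -x0 (from e1: x1+x2 = -2x0, so c = -x0)
  -- substitute x1 = -2x0 - x2 into e2: -3x0² -4x0x2 -2x2² = -1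
  have e3 : 3*(x 0)^2 + 4*(x 0)*(x 2) + 2*(x 2)^2 = 1 := by
    linear_combination (-1 : ℤ)*e2 + (2*x 0 + x 2 - x 1)*e1
  have hx0 : x 0 = 1 ∨ x 0 = -1 := by
    have hb : (x 0)^2 ≤ 1 := by nlinarith [sq_nonneg (x 0 + x 2)]
    have h00 : x 0 ≠ 0 := by
      intro h
      rcases lt_trichotomy (x 2) 0 with h' | h' | h'
      · nlinarith [sq_nonneg (x 2 + 1)]
      · nlinarith
      · nlinarith [sq_nonneg (x 2 - 1)]
    have hr : -1 ≤ x 0 ∧ x 0 ≤ 1 := by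
      constructor
      · nlinarith [sq_nonneg (x 0 + 1)]
      · nlinarith [sq_nonneg (x 0 - 1)]
    omega
  rcases hx0 with h | h
  · left
    have h6 : 2*(x 2 + 1)^2 = 0 := by linear_combination e3 - (3*x 0 + 4*x 2 + 3)*h
    have h7 : (x 2 + 1)^2 = 0 := by linarith [sq_nonneg (x 2 + 1)]
    have hx2 : x 2 = -1 := by have := pow_eq_zero_iff (n := 2) (by norm_num) |>.mp h7; linarith
    have hx1 : x 1 = -1 := by omega
    funext i; fin_cases i <;> simp [h, hx1, hx2, vv]
  · right
    have h6 : 2*(x 2 - 1)^2 = 0 := by linear_combination e3 - (3*x 0 + 4*x 2 - 3)*h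
    have h7 : (x 2 - 1)^2 = 0 := by linarith [sq_nonneg (x 2 - 1)]
    have hx2 : x 2 = 1 := by have := pow_eq_zero_iff (n := 2) (by norm_num) |>.mp h7; linarith
    have hx1 : x 1 = 1 := by omega
    funext i; fin_cases i <;> simp [h, hx1, hx2, vv]

lemma img_uu_cases {A : MU} (hA : A ∈ OSub)
    (hw : (A : Matrix (Fin 3) (Fin 3) ℤ).mulVec w2v = w2v)
    (hv : (A : Matrix (Fin 3) (Fin 3) ℤ).mulVec vv = vv) :
    (A : Matrix (Fin 3) (Fin 3) ℤ).mulVec uu = uu ∨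
    (A : Matrix (Fin 3) (Fin 3) ℤ).mulVec uu = -uu := by
  set x := (A : Matrix (Fin 3) (Fin 3) ℤ).mulVec uu with hx
  have hQx : Q3 x x = -2 := by rw [hx, Q3_mulVec hA.1]; decide
  have hQw : Q3 x w2v = 0 := by
    rw [hx]; conv_lhs => rw [show w2v = (A : Matrix (Fin 3) (Fin 3) ℤ).mulVec w2v from hw.symm]
    rw [Q3_mulVec hA.1]; decide
  have hQv : Q3 x vv = 0 := by
    rw [hx]; conv_lhs => rw [show vv = (A : Matrix (Fin 3) (Fin 3) ℤ).mulVec vv from hv.symm]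
    rw [Q3_mulVec hA.1]; decide
  have e1 : 2 * x 0 + x 1 + x 2 = 0 := by simp [Q3, w2v] at hQw; linarith
  have e2 : x 0 + x 1 + x 2 = 0 := by simp [Q3, vv] at hQv; linarith
  have hx0 : x 0 = 0 := by linarith
  have e3 : x 1 = -(x 2) := by linarith
  have e4 : x 0^2 - x 1^2 - x 2^2 = -2 := by rw [Q3_self] at hQx; linarith
  have h5a : 2*(x 2)^2 = 2 := by
    linear_combination (-(1:ℤ))*e4 + (x 0)*hx0 + (x 2 - x 1)*(by linarith : x 1 + x 2 = (0:ℤ))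
  have h5 : (x 2)^2 = 1 := by linarith
  have hx2 : x 2 = 1 ∨ x 2 = -1 := sq_one_cases h5
  rcases hx2 with h | h
  · right; funext i; fin_cases i <;> simp [hx0, e3, h, uu]
  · left; funext i; fin_cases i <;> simp [hx0, e3, h, uu]

----------------------------------------------------------------
-- full stabilizer of w2v

lemma r2_uu : (refE1E2 : Matrix (Fin 3) (Fin 3) ℤ).mulVec uu = -uu := by
  rw [refE1E2_val]; decide
lemma r2_vv : (refE1E2 : Matrix (Fin 3) (Fin 3) ℤ).mulVec vv = vv := by
  rw [refE1E2_val]; decide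
lemma r2_w2v : (refE1E2 : Matrix (Fin 3) (Fin 3) ℤ).mulVec w2v = w2v := by
  rw [refE1E2_val]; decide
lemma r3_uu : (refHE1E2 : Matrix (Fin 3) (Fin 3) ℤ).mulVec uu = uu := by
  rw [refHE1E2_val]; decide
lemma r3_vv : (refHE1E2 : Matrix (Fin 3) (Fin 3) ℤ).mulVec vv = -vv := by
  rw [refHE1E2_val]; decide
lemma r3_w2v : (refHE1E2 : Matrix (Fin 3) (Fin 3) ℤ).mulVec w2v = w2v := by
  rw [refHE1E2_val]; decide

lemma stab_w2v_cases {A : MU} (hA : A ∈ OSub)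
    (hw : (A : Matrix (Fin 3) (Fin 3) ℤ).mulVec w2v = w2v) :
    A = 1 ∨ A = refE1E2 ∨ A = refHE1E2 ∨ A = refHE1E2 * refE1E2 := by
  rcases img_vv_cases hA hw with hv | hv
  · rcases img_uu_cases hA hw hv with hu | hu
    · left; exact fix_uvw_eq_one hw hv hu
    · right; left
      have h1 : refE1E2 * A = 1 := by
        apply fix_uvw_eq_one <;> rw [mulVec_unit_mul]
        · rw [hw, r2_w2v]
        · rw [hv, r2_vv]
        · rw [hu, Matrix.mulVec_neg, r2_uu, neg_neg]
      have := eq_inv_of_mul_eq_one_right h1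
      rw [this, r2_inv]
  · have hv3 : (refHE1E2 * A : MU).val.mulVec vv = vv := by
      rw [mulVec_unit_mul, hv, Matrix.mulVec_neg, r3_vv, neg_neg]
    have hw3 : (refHE1E2 * A : MU).val.mulVec w2v = w2v := by
      rw [mulVec_unit_mul, hw, r3_w2v]
    rcases img_uu_cases (mul_mem r3_mem hA) hw3 hv3 with hu | hu
    · right; right; left
      have h1 : refHE1E2 * A = 1 := fix_uvw_eq_one hw3 hv3 hu
      have := eq_inv_of_mul_eq_one_right h1
      rw [this, r3_inv]
    · right; right; right
      have h1 : refE1E2 * (refHE1E2 * A) = 1 := by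
        apply fix_uvw_eq_one <;> rw [mulVec_unit_mul]
        · rw [hw3, r2_w2v]
        · rw [hv3, r2_vv]
        · rw [hu, Matrix.mulVec_neg, r2_uu, neg_neg]
      have h2 : (refE1E2 * refHE1E2) * A = 1 := by rw [mul_assoc]; exact h1
      have := eq_inv_of_mul_eq_one_right h2
      rw [this, _root_.mul_inv_rev, r2_inv, r3_inv]

----------------------------------------------------------------
-- pin: fixes ee0 and a wall3/interior-type point ⇒ identity

lemma pin_generic {B : MU} (hB : B ∈ OSub)
    (h0 : (B : Matrix (Fin 3) (Fin 3) ℤ).mulVec ee0 = ee0)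
    {w : V3} (hBw : (B : Matrix (Fin 3) (Fin 3) ℤ).mulVec w = w)
    (h1 : w 1 < w 2) (h2 : w 2 < 0) : B = 1 := by
  have hzw : (![0, w 1, w 2] : V3) = w - (w 0) • ee0 := by
    funext i; fin_cases i <;> simp [ee0]
  have hz : (B : Matrix (Fin 3) (Fin 3) ℤ).mulVec ![0, w 1, w 2] = ![0, w 1, w 2] := by
    rw [hzw, Matrix.mulVec_sub, Matrix.mulVec_smul, hBw, h0]
  have key : ∀ y : V3, Q3 ((B : Matrix (Fin 3) (Fin 3) ℤ).mulVec y) ![0, w 1, w 2] = Q3 y ![0, w 1, w 2] := by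
    intro y
    conv_lhs => rw [← hz]
    exact Q3_mulVec hB.1 y ![0, w 1, w 2]
  have hqe1 := key ee1
  have hqe2 := key ee2
  have hx1 : (B : Matrix (Fin 3) (Fin 3) ℤ).mulVec ee1 = ee1 := by
    rcases img_e1_cases hB h0 with h | h | h | h
    · exact h
    · rw [h] at hqe1; simp [Q3, ee1] at hqe1; omega
    · rw [h] at hqe1; simp [Q3, ee1, ee2] at hqe1; omega
    · rw [h] at hqe1; simp [Q3, ee1, ee2] at hqe1; omega
  have hx2 : (B : Matrix (Fin 3) (Fin 3) ℤ).mulVec ee2 = ee2 := by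
    rcases img_e2_cases hB h0 hx1 with h | h
    · exact h
    · rw [h] at hqe2; simp [Q3, ee2] at hqe2; omega
  exact unit_eq_one_of_fix h0 hx1 hx2

----------------------------------------------------------------
-- classification of stabilizers of chamber points

lemma q3_ee0 : Q3 ee0 ee0 = 1 := by decide

lemma orbit_setup {A : MU} (hA : A ∈ OSub) :
    Q3 ((A : Matrix (Fin 3) (Fin 3) ℤ).mulVec ee0) ((A : Matrix (Fin 3) (Fin 3) ℤ).mulVec ee0) = 1
    ∧ 1 ≤ ((A : Matrix (Fin 3) (Fin 3) ℤ).mulVec ee0) 0 := by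
  constructor
  · rw [Q3_mulVec hA.1]; exact q3_ee0
  · exact mulVec_pos hA.1 hA.2 (le_of_eq q3_ee0.symm) (by decide)

lemma fix_scale {A : MU} {w : V3} {c : ℤ} (hc : c ≠ 0) {v : V3} (hwv : w = c • v)
    (hw : (A : Matrix (Fin 3) (Fin 3) ℤ).mulVec w = w) :
    (A : Matrix (Fin 3) (Fin 3) ℤ).mulVec v = v := by
  rw [hwv, Matrix.mulVec_smul] at hw
  funext i
  have := congrFun hw i
  simp only [Pi.smul_apply, smul_eq_mul] at this
  exact mul_left_cancel₀ hc this

lemma stab_classify {w : V3} (hC : inC w) (hQ : 1 ≤ Q3 w w) (h0w : 1 ≤ w 0) :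
    (∀ A : MU, A ∈ OSub → (A : Matrix (Fin 3) (Fin 3) ℤ).mulVec w = w → A ∈ K1grp) ∨
    (∀ A : MU, A ∈ OSub → (A : Matrix (Fin 3) (Fin 3) ℤ).mulVec w = w → A ∈ K2grp) := by
  obtain ⟨hc1, hc2, hc3⟩ := hC
  -- generic fact for the min-orbit argument
  have main : ∀ A : MU, A ∈ OSub → (A : Matrix (Fin 3) (Fin 3) ℤ).mulVec w = w →
      ∃ u ∈ SwGrp w, u⁻¹ * A ∈ OSub ∧
        ((u⁻¹ * A : MU) : Matrix (Fin 3) (Fin 3) ℤ).mulVec ee0 = ee0 ∧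
        ((u⁻¹ * A : MU) : Matrix (Fin 3) (Fin 3) ℤ).mulVec w = w ∧ A = u * (u⁻¹ * A) := by
    intro A hA hw
    obtain ⟨hq1, hq2⟩ := orbit_setup hA
    have hQeq : Q3 ((A : Matrix (Fin 3) (Fin 3) ℤ).mulVec ee0) w = Q3 ee0 w := by
      conv_lhs => rw [← hw]
      exact Q3_mulVec hA.1 ee0 w
    rcases min_orbit ⟨hc1, hc2, hc3⟩ hq1 hq2 with ⟨u, hu, hq⟩ | hgt
    · have huO : u ∈ OSub := Wgrp_le_OSub (SwGrp_le_Wgrp w hu)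
      have huw : (u : Matrix (Fin 3) (Fin 3) ℤ).mulVec w = w := SwGrp_le_stab w hu
      refine ⟨u, hu, mul_mem (inv_mem huO) hA, ?_, ?_, by group⟩
      · rw [mulVec_unit_mul, hq]
        have : (u⁻¹ : MU).val.mulVec ((u : MU).val.mulVec ee0) = ((u⁻¹ * u : MU)).val.mulVec ee0 :=
          (mulVec_unit_mul u⁻¹ u ee0).symm
        rw [this, inv_mul_cancel, Units.val_one, Matrix.one_mulVec]
      · rw [mulVec_unit_mul, hw]
        have hiw : (u⁻¹ : MU) ∈ stabSub w := (stabSub w).inv_mem huw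
        exact hiw
    · exfalso; rw [hQeq] at hgt; exact lt_irrefl _ hgt
  by_cases hv : w 1 = w 2
  · by_cases hz : w 2 = 0
    · -- vertex A
      left
      intro A hA hw
      have hfix : (A : Matrix (Fin 3) (Fin 3) ℤ).mulVec ee0 = ee0 := by
        apply fix_scale (show w 0 ≠ 0 by omega) _ hw
        funext i; fin_cases i <;> simp [ee0, hv ▸ hz, hz] <;> omega
      exact stab_e0_K1 hA hfix
    · have hz' : w 2 < 0 := lt_of_le_of_ne hc2 hz
      by_cases hs : w 0 + w 1 + w 2 = 0
      · -- vertex B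
        right
        intro A hA hw
        have hfix : (A : Matrix (Fin 3) (Fin 3) ℤ).mulVec w2v = w2v := by
          apply fix_scale (show -(w 2) ≠ 0 by omega) _ hw
          funext i; fin_cases i <;> simp [w2v] <;> omega
        rcases stab_w2v_cases hA hfix with h | h | h | h <;> rw [h]
        · exact one_mem _
        · exact r2_K2
        · exact r3_K2
        · exact mul_mem r3_K2 r2_K2
      · -- wall 2 : w1 = w2 < 0, s > 0
        left
        intro A hA hw
        obtain ⟨u, hu, hBO, hB0, hBw, hAu⟩ := main A hA hw
        have hSw : SwGrp w ≤ K1grp := by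
          rw [SwGrp, Subgroup.closure_le]
          rintro r ⟨hr, hrw⟩
          rcases hr with rfl | rfl | rfl
          · exfalso
            have := congrFun ((r1_act w) ▸ hrw) 2
            simp at this; omega
          · exact r2_K1
          · exfalso
            have := congrFun ((r3_act w) ▸ hrw) 0
            simp at this; omega
        have hB : u⁻¹ * A ∈ K1grp := stab_e0_K1 hBO hB0
        rw [hAu]; exact mul_mem (hSw hu) hB
  · have hv' : w 1 < w 2 := lt_of_le_of_ne hc1 hv
    by_cases hz : w 2 = 0
    · -- wall 1 : w1 < w2 = 0, s > 0 (s = 0 impossible by timelike)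
      left
      intro A hA hw
      have hs : w 0 + w 1 + w 2 ≠ 0 := by
        intro h
        rw [Q3_self] at hQ; nlinarith [hQ]
      obtain ⟨u, hu, hBO, hB0, hBw, hAu⟩ := main A hA hw
      have hSw : SwGrp w ≤ K1grp := by
        rw [SwGrp, Subgroup.closure_le]
        rintro r ⟨hr, hrw⟩
        rcases hr with rfl | rfl | rfl
        · exact r1_K1
        · exfalso
          have := congrFun ((r2_act w) ▸ hrw) 1
          simp at this; omega
        · exfalso
          have := congrFun ((r3_act w) ▸ hrw) 0
          simp at this; omega
      have hB : u⁻¹ * A ∈ K1grp := stab_e0_K1 hBO hB0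
      rw [hAu]; exact mul_mem (hSw hu) hB
    · have hz' : w 2 < 0 := lt_of_le_of_ne hc2 hz
      by_cases hs : w 0 + w 1 + w 2 = 0
      · -- wall 3 : w1 < w2 < 0, s = 0
        right
        intro A hA hw
        obtain ⟨u, hu, hBO, hB0, hBw, hAu⟩ := main A hA hw
        have hSw : SwGrp w ≤ K2grp := by
          rw [SwGrp, Subgroup.closure_le]
          rintro r ⟨hr, hrw⟩
          rcases hr with rfl | rfl | rfl
          · exfalso
            have := congrFun ((r1_act w) ▸ hrw) 2
            simp at this; omega
          · exfalso
            have := congrFun ((r2_act w) ▸ hrw) 1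
            simp at this; omega
          · exact r3_K2
        have hB : u⁻¹ * A = 1 := pin_generic hBO hB0 hBw hv' hz'
        rw [hAu, hB, mul_one]; exact hSw hu
      · -- interior
        left
        intro A hA hw
        obtain ⟨u, hu, hBO, hB0, hBw, hAu⟩ := main A hA hw
        have hSw : SwGrp w ≤ ⊥ := by
          rw [SwGrp, Subgroup.closure_le]
          rintro r ⟨hr, hrw⟩
          exfalso
          rcases hr with rfl | rfl | rfl
          · have := congrFun ((r1_act w) ▸ hrw) 2
            simp at this; omega
          · have := congrFun ((r2_act w) ▸ hrw) 1
            simp at this; omega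
          · have := congrFun ((r3_act w) ▸ hrw) 0
            simp at this; omega
        have hu1 : u = 1 := Subgroup.mem_bot.mp (hSw hu)
        have hB : u⁻¹ * A = 1 := pin_generic hBO hB0 hBw hv' hz'
        rw [hAu, hB, mul_one, hu1]; exact one_mem _

----------------------------------------------------------------
-- finiteness of K1grp and K2grp

lemma K2_le_stab : K2grp ≤ stabSub w2v ⊓ OSub := by
  rw [K2grp, Subgroup.closure_le]
  rintro r (rfl | rfl)
  · exact ⟨r3_w2v, r3_mem⟩
  · exact ⟨r2_w2v, r2_mem⟩

lemma K2_finite : (K2grp : Set MU).Finite := by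
  have hfin : ({1, refE1E2, refHE1E2, refHE1E2 * refE1E2} : Set MU).Finite :=
    Set.Finite.insert _ (Set.Finite.insert _ (Set.Finite.insert _ (Set.finite_singleton _)))
  apply Set.Finite.subset hfin
  intro A hA
  obtain ⟨hst, hO⟩ := K2_le_stab hA
  rcases stab_w2v_cases hO hst with h | h | h | h <;> simp [h]

lemma img_e2_cases4 {A : MU} (hA : A ∈ OSub)
    (hfix : (A : Matrix (Fin 3) (Fin 3) ℤ).mulVec ee0 = ee0) :
    (A : Matrix (Fin 3) (Fin 3) ℤ).mulVec ee2 = ee1 ∨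
    (A : Matrix (Fin 3) (Fin 3) ℤ).mulVec ee2 = -ee1 ∨
    (A : Matrix (Fin 3) (Fin 3) ℤ).mulVec ee2 = ee2 ∨
    (A : Matrix (Fin 3) (Fin 3) ℤ).mulVec ee2 = -ee2 := by
  set x := (A : Matrix (Fin 3) (Fin 3) ℤ).mulVec ee2 with hx
  have hQx : Q3 x x = -1 := by rw [hx, Q3_mulVec hA.1]; decide
  have hQ0 : Q3 x ee0 = 0 := by
    rw [hx]; conv_lhs => rw [show ee0 = (A : Matrix (Fin 3) (Fin 3) ℤ).mulVec ee0 from hfix.symm]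
    rw [Q3_mulVec hA.1]; decide
  have hx0 : x 0 = 0 := by simpa [Q3, ee0] using hQ0
  have hx12 : x 1^2 + x 2^2 = 1 := by rw [Q3_self] at hQx; nlinarith [hQx, hx0]
  have hb1 : -1 ≤ x 1 ∧ x 1 ≤ 1 := by constructor <;> nlinarith [sq_nonneg (x 2)]
  have veq : ∀ a b : ℤ, x 1 = a → x 2 = b → x = ![0, a, b] := by
    intro a b h1 h2; funext i; fin_cases i <;> simp [hx0, h1, h2]
  rcases (by omega : x 1 = -1 ∨ x 1 = 0 ∨ x 1 = 1) with h1 | h1 | h1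
  · have h2 : x 2 = 0 := by nlinarith
    right; left; rw [veq _ _ h1 h2]; funext i; fin_cases i <;> simp [ee1]
  · have h2 : x 2 = 1 ∨ x 2 = -1 := sq_one_cases (by nlinarith)
    rcases h2 with h2 | h2
    · right; right; left; rw [veq _ _ h1 h2]; funext i; fin_cases i <;> simp [ee2]
    · right; right; right; rw [veq _ _ h1 h2]; funext i; fin_cases i <;> simp [ee2]
  · have h2 : x 2 = 0 := by nlinarith
    left; rw [veq _ _ h1 h2]; funext i; fin_cases i <;> simp [ee1]

lemma K1_le_stab : K1grp ≤ stabSub ee0 ⊓ OSub := by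
  rw [K1grp, Subgroup.closure_le]
  rintro r (rfl | rfl)
  · exact ⟨show (refE1E2 : Matrix (Fin 3) (Fin 3) ℤ).mulVec ee0 = ee0 by rw [refE1E2_val]; decide, r2_mem⟩
  · exact ⟨show (refE2 : Matrix (Fin 3) (Fin 3) ℤ).mulVec ee0 = ee0 by rw [refE2_val]; decide, r1_mem⟩

lemma stab_e0_finite : {A : MU | A ∈ OSub ∧ (A : Matrix (Fin 3) (Fin 3) ℤ).mulVec ee0 = ee0}.Finite := by
  set S := {A : MU | A ∈ OSub ∧ (A : Matrix (Fin 3) (Fin 3) ℤ).mulVec ee0 = ee0}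
  set f : MU → V3 × V3 := fun A =>
    ((A : Matrix (Fin 3) (Fin 3) ℤ).mulVec ee1, (A : Matrix (Fin 3) (Fin 3) ℤ).mulVec ee2)
  have hT : ({ee1, -ee1, ee2, -ee2} : Set V3).Finite :=
    Set.Finite.insert _ (Set.Finite.insert _ (Set.Finite.insert _ (Set.finite_singleton _)))
  have himg : (f '' S).Finite := by
    apply Set.Finite.subset (Set.Finite.prod hT hT)
    rintro x ⟨A, ⟨hO, hfix⟩, hfA⟩
    rw [← hfA]
    refine ⟨?_, ?_⟩
    · rcases img_e1_cases hO hfix with h | h | h | h <;> simp [f, h]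
    · rcases img_e2_cases4 hO hfix with h | h | h | h <;> simp [f, h]
  apply Set.Finite.of_finite_image himg
  rintro A ⟨hAO, hA0⟩ B ⟨hBO, hB0⟩ hfAB
  have h1 : (A : Matrix (Fin 3) (Fin 3) ℤ).mulVec ee1 = (B : Matrix (Fin 3) (Fin 3) ℤ).mulVec ee1 :=
    congrArg Prod.fst hfAB
  have h2 : (A : Matrix (Fin 3) (Fin 3) ℤ).mulVec ee2 = (B : Matrix (Fin 3) (Fin 3) ℤ).mulVec ee2 :=
    congrArg Prod.snd hfAB
  have key : B⁻¹ * A = 1 := by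
    apply unit_eq_one_of_fix <;> rw [mulVec_unit_mul]
    · rw [hA0]
      conv_lhs => rw [← hB0]
      rw [Matrix.mulVec_mulVec, ← Units.val_mul, inv_mul_cancel, Units.val_one,
        Matrix.one_mulVec]
    · rw [h1, Matrix.mulVec_mulVec, ← Units.val_mul, inv_mul_cancel, Units.val_one,
        Matrix.one_mulVec]
    · rw [h2, Matrix.mulVec_mulVec, ← Units.val_mul, inv_mul_cancel, Units.val_one,
        Matrix.one_mulVec]
  calc A = B * (B⁻¹ * A) := by group
  _ = B := by rw [key, mul_one]

lemma K1_finite : (K1grp : Set MU).Finite := by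
  apply Set.Finite.subset stab_e0_finite
  intro A hA
  obtain ⟨hst, hO⟩ := K1_le_stab hA
  exact ⟨hO, hst⟩

lemma K1_le_OSub : K1grp ≤ OSub := fun A hA => (K1_le_stab hA).2
lemma K2_le_OSub : K2grp ≤ OSub := fun A hA => (K2_le_stab hA).2

----------------------------------------------------------------
-- averaging

lemma Q3_sum_left {α : Type*} (s : Finset α) (f : α → V3) (y : V3) :
    Q3 (∑ g ∈ s, f g) y = ∑ g ∈ s, Q3 (f g) y := by
  simp only [Q3, Finset.sum_apply, Finset.sum_mul]
  rw [← Finset.sum_sub_distrib, ← Finset.sum_sub_distrib]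

lemma Q3_sum_right {α : Type*} (s : Finset α) (f : α → V3) (y : V3) :
    Q3 y (∑ g ∈ s, f g) = ∑ g ∈ s, Q3 y (f g) := by
  simp only [Q3, Finset.sum_apply, Finset.mul_sum]
  rw [← Finset.sum_sub_distrib, ← Finset.sum_sub_distrib]

lemma sum_ge_one {α : Type*} {s : Finset α} (hs : s.Nonempty) {f : α → ℤ}
    (hf : ∀ i ∈ s, 1 ≤ f i) : 1 ≤ ∑ i ∈ s, f i := by
  obtain ⟨a, ha⟩ := hs
  calc (1:ℤ) ≤ f a := hf a ha
  _ ≤ ∑ i ∈ s, f i := Finset.single_le_sum (fun i hi => le_trans one_pos.le (hf i hi)) ha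

lemma mulVec_finset_sum {α : Type*} (s : Finset α) (M : Matrix (Fin 3) (Fin 3) ℤ) (f : α → V3) :
    M.mulVec (∑ g ∈ s, f g) = ∑ g ∈ s, M.mulVec (f g) := by
  classical
  induction s using Finset.induction_on with
  | empty => simp
  | insert _ _ h ih => rw [Finset.sum_insert h, Finset.sum_insert h, Matrix.mulVec_add, ih]

theorem max_finite_subgroups_Oplus21' (G : Subgroup MU)
    (hGsub : (G : Set MU) ⊆ Oplus21)
    (hGfin : (G : Set MU).Finite)
    (hGmax : ∀ G' : Subgroup MU,
      (G' : Set MU) ⊆ Oplus21 → (G' : Set MU).Finite → G ≤ G' → G = G') :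
    ∃ g ∈ Oplus21,
      G = Subgroup.map (MulAut.conj g).toMonoidHom (Subgroup.closure {refE1E2, refE2}) ∨
      G = Subgroup.map (MulAut.conj g).toMonoidHom (Subgroup.closure {refHE1E2, refE1E2}) := by
  classical
  set Gf : Finset MU := hGfin.toFinset with hGf
  have hmemGf : ∀ g : MU, g ∈ Gf ↔ g ∈ G := by intro g; simp [hGf]
  have hGfne : Gf.Nonempty := ⟨1, (hmemGf 1).mpr (one_mem G)⟩
  set F : MU → V3 := fun g => (g : Matrix (Fin 3) (Fin 3) ℤ).mulVec ee0 with hF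
  set wa : V3 := ∑ g ∈ Gf, F g with hwa
  have hmemO : ∀ g : MU, g ∈ Gf → g ∈ OSub := fun g hg => hGsub ((hmemGf g).mp hg)
  -- invariance
  have hinv : ∀ h : MU, h ∈ G → (h : Matrix (Fin 3) (Fin 3) ℤ).mulVec wa = wa := by
    intro h hh
    rw [hwa, mulVec_finset_sum]
    have himg : Gf.image (fun g => h * g) = Gf := by
      ext x
      simp only [Finset.mem_image, hmemGf]
      constructor
      · rintro ⟨g, hg, rfl⟩; exact mul_mem hh hg
      · intro hx; exact ⟨h⁻¹ * x, mul_mem (inv_mem hh) hx, by group⟩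
    have hstep : ∀ g : MU, (h : Matrix (Fin 3) (Fin 3) ℤ).mulVec (F g) = F (h * g) := by
      intro g
      show (h : Matrix (Fin 3) (Fin 3) ℤ).mulVec ((g : Matrix (Fin 3) (Fin 3) ℤ).mulVec ee0)
        = ((h * g : MU) : Matrix (Fin 3) (Fin 3) ℤ).mulVec ee0
      rw [Matrix.mulVec_mulVec, ← Units.val_mul]
    calc ∑ g ∈ Gf, (h : Matrix (Fin 3) (Fin 3) ℤ).mulVec (F g)
        = ∑ g ∈ Gf, F (h * g) := by simp_rw [hstep]
    _ = ∑ x ∈ Gf.image (fun g => h * g), F x := by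
        rw [Finset.sum_image (fun x _ y _ hxy => by exact mul_left_cancel hxy)]
    _ = wa := by rw [himg, hwa]
  -- positivity
  have hFQ : ∀ g ∈ Gf, Q3 (F g) (F g) = 1 ∧ 1 ≤ (F g) 0 := by
    intro g hg
    exact orbit_setup (hmemO g hg)
  have hwa0 : 1 ≤ wa 0 := by
    rw [hwa, Finset.sum_apply]
    exact sum_ge_one hGfne (fun g hg => (hFQ g hg).2)
  have hwaQ : 1 ≤ Q3 wa wa := by
    rw [hwa, Q3_sum_left]
    apply sum_ge_one hGfne
    intro g hg
    rw [Q3_sum_right]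
    apply sum_ge_one hGfne
    intro g' hg'
    exact Q3_pos (le_of_eq (hFQ g hg).1.symm) (hFQ g hg).2
      (le_of_eq (hFQ g' hg').1.symm) (hFQ g' hg').2
  -- reduce to the chamber
  obtain ⟨u, huW, hCw⟩ := reduce hwaQ hwa0
  have huO : u ∈ OSub := Wgrp_le_OSub huW
  set w : V3 := (u : Matrix (Fin 3) (Fin 3) ℤ).mulVec wa with hwdef
  have hwQ : 1 ≤ Q3 w w := by rw [hwdef, Q3_mulVec huO.1]; exact hwaQ
  have hw0 : 1 ≤ w 0 := mulVec_pos huO.1 huO.2 hwaQ hwa0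
  -- conjugated group stabilizes w
  have hconj : ∀ a : MU, a ∈ G → (u * a * u⁻¹ ∈ OSub) ∧
      ((u * a * u⁻¹ : MU) : Matrix (Fin 3) (Fin 3) ℤ).mulVec w = w := by
    intro a ha
    refine ⟨mul_mem (mul_mem huO (hGsub ha)) (inv_mem huO), ?_⟩
    have hcanc : ((u⁻¹ : MU) : Matrix (Fin 3) (Fin 3) ℤ).mulVec w = wa := by
      rw [hwdef, Matrix.mulVec_mulVec, ← Units.val_mul, inv_mul_cancel, Units.val_one,
        Matrix.one_mulVec]
    rw [mulVec_unit_mul, mulVec_unit_mul, hcanc, hinv a ha]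
  -- conclude
  have final : ∀ K : Subgroup MU, K ≤ OSub → (K : Set MU).Finite →
      (∀ a : MU, a ∈ G → u * a * u⁻¹ ∈ K) →
      G = Subgroup.map (MulAut.conj u⁻¹).toMonoidHom K := by
    intro K hKO hKfin hGK
    set G' := Subgroup.map (MulAut.conj u⁻¹).toMonoidHom K with hG'
    have hG'sub : (G' : Set MU) ⊆ Oplus21 := by
      rintro x ⟨k, hk, rfl⟩
      show (MulAut.conj u⁻¹) k ∈ OSub
      simp only [MulAut.conj_apply]
      exact mul_mem (mul_mem (inv_mem huO) (hKO hk)) (by simpa using huO)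
    have hG'fin : (G' : Set MU).Finite := by
      rw [hG', Subgroup.coe_map]
      exact Set.Finite.image _ hKfin
    have hGle : G ≤ G' := by
      intro a ha
      refine ⟨u * a * u⁻¹, hGK a ha, ?_⟩
      show u⁻¹ * (u * a * u⁻¹) * (u⁻¹)⁻¹ = a
      group
    exact hGmax G' hG'sub hG'fin hGle
  have huinv : u⁻¹ ∈ Oplus21 := inv_mem huO
  rcases stab_classify hCw hwQ hw0 with hcase | hcase
  · refine ⟨u⁻¹, huinv, Or.inl ?_⟩
    exact final K1grp K1_le_OSub K1_finite
      (fun a ha => hcase _ (hconj a ha).1 (hconj a ha).2)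
  · refine ⟨u⁻¹, huinv, Or.inr ?_⟩
    exact final K2grp K2_le_OSub K2_finite
      (fun a ha => hcase _ (hconj a ha).1 (hconj a ha).2)

/-- Every maximal finite subgroup of `O⁺(2,1)(ℤ)` is conjugate in `O⁺(2,1)(ℤ)` to
`G_{H−E₁−E₂} = ⟨Ref_{E₁−E₂}, Ref_{E₂}⟩` or to `G_{E₂} = ⟨Ref_{H−E₁−E₂}, Ref_{E₁−E₂}⟩`. -/
theorem max_finite_subgroups_Oplus21 (G : Subgroup (Matrix (Fin 3) (Fin 3) ℤ)ˣ)
    (hGsub : (G : Set (Matrix (Fin 3) (Fin 3) ℤ)ˣ) ⊆ Oplus21)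
    (hGfin : (G : Set (Matrix (Fin 3) (Fin 3) ℤ)ˣ).Finite)
    (hGmax : ∀ G' : Subgroup (Matrix (Fin 3) (Fin 3) ℤ)ˣ,
      (G' : Set (Matrix (Fin 3) (Fin 3) ℤ)ˣ) ⊆ Oplus21 →
      (G' : Set (Matrix (Fin 3) (Fin 3) ℤ)ˣ).Finite → G ≤ G' → G = G') :
    ∃ g ∈ Oplus21,
      G = Subgroup.map (MulAut.conj g).toMonoidHom (Subgroup.closure {refE1E2, refE2}) ∨
      G = Subgroup.map (MulAut.conj g).toMonoidHom (Subgroup.closure {refHE1E2, refE1E2}) :=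
  max_finite_subgroups_Oplus21' G hGsub hGfin hGmax
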